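/- Let * be a continuous t-norm and let φ, ψ, ξ be distance distributions. With (φ ⇒ ξ)(t) = sup_{s<t} inf_{q>0} (φ(q) →* ξ(q+s)), it holds that (ψ ⊗ (φ ⇒ ξ))(t) = sup_{s<t} inf_{q>0} ψ(t−s) * (φ(q) →* ξ(q+s)) for every t ∈ [0,∞) (i.e., for every finite t). -/

import Mathlib

open unitInterval
open scoped ENNReal

noncomputable section

instance : Fact ((0:ℝ) ≤ 1) := ⟨zero_le_one⟩

/-- A distance distribution: a map `φ : [0,∞] → [0,1]` with `φ t = ⨆ s < t, φ s`. -/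
def DistDistr (φ : ℝ≥0∞ → I) : Prop :=
  ∀ t, φ t = ⨆ (s : ℝ≥0∞) (_ : s < t), φ s

/-- The one-step function `κ_{p,a}`. -/
def kappa (p : ℝ≥0∞) (a : I) : ℝ≥0∞ → I :=
  fun t => if t ≤ p then 0 else a

/-- A continuous t-norm on `[0,1]`. -/
structure ContinuousTNorm where
  mul : I → I → I
  continuous' : Continuous fun p : I × I => mul p.1 p.2
  comm : ∀ a b, mul a b = mul b a
  assoc : ∀ a b c, mul (mul a b) c = mul a (mul b c)
  mono : ∀ a, Monotone (mul a)
  mul_one : ∀ a, mul a 1 = a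

/-- The residual `a →* b` of a continuous t-norm. -/
def ContinuousTNorm.residual (T : ContinuousTNorm) (a b : I) : I :=
  sSup {c | T.mul a c ≤ b}

/-- Convolution of maps `[0,∞] → [0,1]` w.r.t. a continuous t-norm. -/
def conv (T : ContinuousTNorm) (φ ψ : ℝ≥0∞ → I) : ℝ≥0∞ → I :=
  fun t => ⨆ (r : ℝ≥0∞) (s : ℝ≥0∞) (_ : r + s = t), T.mul (φ r) (ψ s)

/-- `φ⁻ t = ⨆ s < t, φ s`. -/
def lower (φ : ℝ≥0∞ → I) : ℝ≥0∞ → I :=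
  fun t => ⨆ (s : ℝ≥0∞) (_ : s < t), φ s

/- ### Auxiliary lemmas -/

lemma I_bot_eq_zero : (⊥ : I) = 0 :=
  le_antisymm bot_le (Subtype.coe_le_coe.mp nonneg')

namespace ContinuousTNorm

variable (T : ContinuousTNorm)

lemma continuous_right (a : I) : Continuous (T.mul a) :=
  T.continuous'.comp (Continuous.prodMk_right a)

lemma mul_zero' (a : I) : T.mul a 0 = 0 := by
  apply le_antisymm
  · calc T.mul a 0 = T.mul 0 a := T.comm a 0
    _ ≤ T.mul 0 1 := T.mono 0 le_one'
    _ = 0 := T.mul_one 0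
  · exact Subtype.coe_le_coe.mp nonneg'

lemma mul_bot (a : I) : T.mul a ⊥ = ⊥ := by
  rw [I_bot_eq_zero]; exact T.mul_zero' a

lemma mono_left {a b : I} (h : a ≤ b) (c : I) : T.mul a c ≤ T.mul b c := by
  rw [T.comm a c, T.comm b c]; exact T.mono c h

lemma mul_iSup {ι : Sort*} (a : I) (f : ι → I) :
    T.mul a (⨆ i, f i) = ⨆ i, T.mul a (f i) :=
  Monotone.map_iSup_of_continuousAt (T.continuous_right a).continuousAt (T.mono a) (T.mul_bot a)

lemma mul_ciInf {ι : Sort*} [Nonempty ι] (a : I) (f : ι → I) :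
    T.mul a (⨅ i, f i) = ⨅ i, T.mul a (f i) :=
  Monotone.map_ciInf_of_continuousAt (T.continuous_right a).continuousAt (T.mono a)
    (OrderBot.bddBelow _)

lemma mul_iInf_pos (a : I) (g : ℝ≥0∞ → I) :
    T.mul a (⨅ (q : ℝ≥0∞) (_ : 0 < q), g q) = ⨅ (q : ℝ≥0∞) (_ : 0 < q), T.mul a (g q) := by
  haveI : Nonempty {q : ℝ≥0∞ // 0 < q} := ⟨⟨1, zero_lt_one⟩⟩
  rw [iInf_subtype' (f := fun (q : ℝ≥0∞) (_ : 0 < q) => g q),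
    iInf_subtype' (f := fun (q : ℝ≥0∞) (_ : 0 < q) => T.mul a (g q)), T.mul_ciInf]

end ContinuousTNorm

lemma DistDistr.mono {φ : ℝ≥0∞ → I} (h : DistDistr φ) : Monotone φ := by
  intro a b hab
  rcases eq_or_lt_of_le hab with rfl | hlt
  · exact le_rfl
  · rw [h b]
    exact le_iSup₂ (f := fun (s : ℝ≥0∞) (_ : s < b) => φ s) a hlt

lemma main_aux (T : ContinuousTNorm) (ψ G : ℝ≥0∞ → I) (hψ : DistDistr ψ)
    (t : ℝ≥0∞) (ht : t ≠ ∞) :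
    (⨆ (r : ℝ≥0∞) (s : ℝ≥0∞) (_ : r + s = t),
        T.mul (ψ r) (⨆ (s' : ℝ≥0∞) (_ : s' < s), G s'))
      = ⨆ (s : ℝ≥0∞) (_ : s < t), T.mul (ψ (t - s)) (G s) := by
  apply le_antisymm
  · refine iSup_le fun r => iSup_le fun s => iSup_le fun hrs => ?_
    simp only [T.mul_iSup]
    refine iSup_le fun s' => iSup_le fun hs' => ?_
    have hs't : s' < t := lt_of_lt_of_le hs' (hrs ▸ le_add_self)
    have hr : r ≤ t - s' := (ENNReal.cancel_of_ne (ne_top_of_lt hs't)).le_tsub_of_add_le_right (by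
      calc r + s' ≤ r + s := add_le_add le_rfl hs'.le
      _ = t := hrs)
    calc T.mul (ψ r) (G s') ≤ T.mul (ψ (t - s')) (G s') :=
          T.mono_left (hψ.mono hr) (G s')
      _ ≤ _ := le_iSup₂ (f := fun (s : ℝ≥0∞) (_ : s < t) => T.mul (ψ (t - s)) (G s)) s' hs't
  · refine iSup_le fun s => iSup_le fun hst => ?_
    have hsne : s ≠ ∞ := ne_top_of_lt hst
    conv_lhs => rw [hψ (t - s), T.comm]
    simp only [T.mul_iSup]
    refine iSup_le fun u => iSup_le fun hu => ?_
    have hut : u + s < t :=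
      ((ENNReal.cancel_of_ne hsne).lt_tsub_iff_right).mp hu
    have hune : u ≠ ∞ := ne_top_of_lt (lt_of_le_of_lt le_self_add hut)
    have hs_lt : s < t - u :=
      ((ENNReal.cancel_of_ne hune).lt_tsub_iff_right).mpr (by rwa [add_comm])
    have hsum : u + (t - u) = t := add_tsub_cancel_of_le (le_self_add.trans hut.le)
    calc T.mul (G s) (ψ u) = T.mul (ψ u) (G s) := T.comm _ _
      _ ≤ ⨆ (i : ℝ≥0∞) (_ : i < t - u), T.mul (ψ u) (G i) :=
          le_iSup₂ (f := fun (i : ℝ≥0∞) (_ : i < t - u) => T.mul (ψ u) (G i)) s hs_lt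
      _ ≤ _ := le_iSup_of_le u (le_iSup₂_of_le
          (f := fun (v : ℝ≥0∞) (_ : u + v = t) =>
            ⨆ (i : ℝ≥0∞) (_ : i < v), T.mul (ψ u) (G i)) (t - u) hsum le_rfl)

/-- for distance distributions `φ, ψ, ξ` and finite `t`,
`(ψ ⊗ (φ ⇒ ξ)) t = ⨆ s < t, ⨅ q > 0, ψ (t - s) * (φ q →* ξ (q + s))`. -/
theorem stmt_13 (T : ContinuousTNorm) (φ ψ ξ : ℝ≥0∞ → I)
    (hφ : DistDistr φ) (hψ : DistDistr ψ) (hξ : DistDistr ξ) :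
    ∀ t : ℝ≥0∞, t ≠ ∞ →
      conv T ψ (fun u => ⨆ (s : ℝ≥0∞) (_ : s < u), ⨅ (q : ℝ≥0∞) (_ : 0 < q),
          T.residual (φ q) (ξ (q + s))) t
        = ⨆ (s : ℝ≥0∞) (_ : s < t), ⨅ (q : ℝ≥0∞) (_ : 0 < q),
            T.mul (ψ (t - s)) (T.residual (φ q) (ξ (q + s))) := by
  intro t ht
  have hkey : ∀ s : ℝ≥0∞,
      (⨅ (q : ℝ≥0∞) (_ : 0 < q), T.mul (ψ (t - s)) (T.residual (φ q) (ξ (q + s))))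
        = T.mul (ψ (t - s)) (⨅ (q : ℝ≥0∞) (_ : 0 < q), T.residual (φ q) (ξ (q + s))) :=
    fun s => (T.mul_iInf_pos (ψ (t - s)) fun q => T.residual (φ q) (ξ (q + s))).symm
  rw [iSup_congr fun s => iSup_congr fun _ => hkey s]
  exact main_aux T ψ (fun s => ⨅ (q : ℝ≥0∞) (_ : 0 < q), T.residual (φ q) (ξ (q + s))) hψ t ht
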